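/- arXiv:1510.07322 — 7 statements merged into one kernel-verified Lean document; each statement's English description precedes it below -/
import Mathlib

section
/- The affine plane curve X : u^4 + 16uv^3 + 10v^4 + 16v − 4 = 0 has no rational points; that is, for all u, v ∈ ℚ, u^4 + 16·u·v^3 + 10·v^4 + 16·v − 4 ≠ 0. -/
lemma two_dvd_of_pow4 (x k : ℤ) (h : x ^ 4 = 2 * k) : 2 ∣ x :=
  Int.prime_two.dvd_of_dvd_pow ⟨k, h⟩

lemma two_dvd_of_five_pow4 (x k : ℤ) (h : 5 * x ^ 4 = 2 * k) : 2 ∣ x := by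
  rcases (Int.prime_two.dvd_mul).mp ⟨k, h⟩ with h | h
  · norm_num at h
  · exact Int.prime_two.dvd_of_dvd_pow h

lemma int_version : ∀ n : ℕ, ∀ x y z : ℤ, x.natAbs + y.natAbs + z.natAbs ≤ n →
    x ^ 4 + 16 * x * y ^ 3 + 10 * y ^ 4 + 16 * y * z ^ 3 - 4 * z ^ 4 = 0 →
    x = 0 ∧ y = 0 ∧ z = 0 := by
  intro n
  induction n using Nat.strong_induction_on with
  | _ n ih =>
    intro x y z hn h
    by_cases h0 : x = 0 ∧ y = 0 ∧ z = 0
    · exact h0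
    · obtain ⟨a, rfl⟩ : 2 ∣ x :=
        two_dvd_of_pow4 x (-8*x*y^3 - 5*y^4 - 8*y*z^3 + 2*z^4) (by linear_combination h)
      obtain ⟨b, rfl⟩ : 2 ∣ y := by
        refine two_dvd_of_five_pow4 y (-4*a^4 - 8*a*y^3 - 4*y*z^3 + z^4) ?_
        have h2 : 2 * (5 * y ^ 4) = 2 * (2 * (-4*a^4 - 8*a*y^3 - 4*y*z^3 + z^4)) := by
          linear_combination h
        omega
      obtain ⟨c, rfl⟩ : 2 ∣ z := by
        refine two_dvd_of_pow4 z (2*a^4 + 32*a*b^3 + 20*b^4 + 4*b*z^3) ?_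
        have h2 : 4 * z ^ 4 = 4 * (2 * (2*a^4 + 32*a*b^3 + 20*b^4 + 4*b*z^3)) := by
          linear_combination -h
        omega
      have h' : a ^ 4 + 16 * a * b ^ 3 + 10 * b ^ 4 + 16 * b * c ^ 3 - 4 * c ^ 4 = 0 := by
        have h2 : 16 * (a ^ 4 + 16 * a * b ^ 3 + 10 * b ^ 4 + 16 * b * c ^ 3 - 4 * c ^ 4)
            = 16 * 0 := by linear_combination h
        omega
      have hpos : 0 < a.natAbs + b.natAbs + c.natAbs := by
        rcases Nat.eq_zero_or_pos (a.natAbs + b.natAbs + c.natAbs) with hz | hz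
        · exfalso; apply h0
          simp only [Nat.add_eq_zero, Int.natAbs_eq_zero] at hz
          exact ⟨by simp [hz.1.1], by simp [hz.1.2], by simp [hz.2]⟩
        · exact hz
      have hlt : a.natAbs + b.natAbs + c.natAbs < n := by
        have h2a : (2*a).natAbs = 2 * a.natAbs := by simp [Int.natAbs_mul]
        have h2b : (2*b).natAbs = 2 * b.natAbs := by simp [Int.natAbs_mul]
        have h2c : (2*c).natAbs = 2 * c.natAbs := by simp [Int.natAbs_mul]
        omega
      obtain ⟨ha, hb, hc⟩ := ih _ hlt a b c le_rfl h'
      exact ⟨by simp [ha], by simp [hb], by simp [hc]⟩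

theorem stmt_2 : ∀ u v : ℚ, u ^ 4 + 16 * u * v ^ 3 + 10 * v ^ 4 + 16 * v - 4 ≠ 0 := by
  intro u v h
  have hdu : ((u.den : ℕ) : ℚ) ≠ 0 := (Nat.cast_ne_zero (R := ℚ)).mpr u.den_nz
  have hdv : ((v.den : ℕ) : ℚ) ≠ 0 := (Nat.cast_ne_zero (R := ℚ)).mpr v.den_nz
  have hun : ((u.num : ℤ) : ℚ) = u * ((u.den : ℕ) : ℚ) := by
    have := Rat.num_div_den u
    rwa [div_eq_iff hdu] at this
  have hvn : ((v.num : ℤ) : ℚ) = v * ((v.den : ℕ) : ℚ) := by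
    have := Rat.num_div_den v
    rwa [div_eq_iff hdv] at this
  set x : ℤ := u.num * (v.den : ℤ) with hxdef
  set y : ℤ := v.num * (u.den : ℤ) with hydef
  set z : ℤ := (u.den : ℤ) * (v.den : ℤ) with hzdef
  have key : (x:ℚ) ^ 4 + 16 * (x:ℚ) * (y:ℚ) ^ 3 + 10 * (y:ℚ) ^ 4
      + 16 * (y:ℚ) * (z:ℚ) ^ 3 - 4 * (z:ℚ) ^ 4 = 0 := by
    rw [hxdef, hydef, hzdef]
    push_cast
    rw [hun, hvn]
    linear_combination (((u.den : ℕ) : ℚ) * ((v.den : ℕ) : ℚ)) ^ 4 * h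
  have key' : x ^ 4 + 16 * x * y ^ 3 + 10 * y ^ 4 + 16 * y * z ^ 3 - 4 * z ^ 4 = 0 := by
    exact_mod_cast key
  obtain ⟨-, -, hz0⟩ := int_version _ x y z le_rfl key'
  rw [hzdef] at hz0
  have : (u.den : ℤ) * (v.den : ℤ) ≠ 0 :=
    mul_ne_zero (by exact_mod_cast u.den_nz) (by exact_mod_cast v.den_nz)
  exact this hz0
end

section
/- For every real number u there exists a real number v such that u^4 + 16·u·v^3 + 10·v^4 + 16·v − 4 = 0; that is, the u-coordinate map from the real points of the curve X to ℝ is surjective. -/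
theorem stmt_5 : ∀ u : ℝ, ∃ v : ℝ,
    u ^ 4 + 16 * u * v ^ 3 + 10 * v ^ 4 + 16 * v - 4 = 0 := by
  intro u
  set b : ℝ := 2 * |u| + 2 with hbdef
  have habs : -|u| ≤ u := neg_abs_le u
  have habs' : u ≤ |u| := le_abs_self u
  have hb0 : (0:ℝ) ≤ b := by positivity
  have hb2 : (2:ℝ) ≤ b := by simp only [hbdef]; linarith [abs_nonneg u]
  obtain ⟨a, hab, ha⟩ : ∃ a : ℝ, a ≤ b ∧
      u ^ 4 + 16 * u * a ^ 3 + 10 * a ^ 4 + 16 * a - 4 ≤ 0 := by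
    rcases le_or_gt 0 u with h | h
    · refine ⟨-u, by simp only [hbdef]; linarith, ?_⟩
      nlinarith [pow_nonneg h 4, pow_nonneg h 3]
    rcases le_or_gt (-8/5) u with h2 | h2
    · refine ⟨-3/10, by linarith, ?_⟩
      nlinarith [mul_nonneg (by linarith : (0:ℝ) ≤ u + 8/5) (by linarith : (0:ℝ) ≤ -u), sq_nonneg (u^2 - 64/25), sq_nonneg u]
    rcases le_or_gt (-2) u with h3 | h3
    · refine ⟨2, by linarith, ?_⟩
      nlinarith [mul_nonneg (by linarith : (0:ℝ) ≤ u + 2) (by linarith : (0:ℝ) ≤ -u), sq_nonneg (u^2 - 4)]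
    · refine ⟨-u, by simp only [hbdef]; linarith, ?_⟩
      nlinarith [sq_nonneg u, sq_nonneg (u^2 - 4), sq_nonneg (u + 2)]
  have key : 0 ≤ b ^ 3 * (10 * b + 16 * u) := by
    apply mul_nonneg (pow_nonneg hb0 3)
    simp only [hbdef]; linarith
  have hbval : 0 ≤ u ^ 4 + 16 * u * b ^ 3 + 10 * b ^ 4 + 16 * b - 4 := by
    nlinarith [key, sq_nonneg (u ^ 2), hb2]
  have hc : ContinuousOn
      (fun v : ℝ => u ^ 4 + 16 * u * v ^ 3 + 10 * v ^ 4 + 16 * v - 4)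
      (Set.Icc a b) := by fun_prop
  have h0 : (0:ℝ) ∈ Set.Icc
      (u ^ 4 + 16 * u * a ^ 3 + 10 * a ^ 4 + 16 * a - 4)
      (u ^ 4 + 16 * u * b ^ 3 + 10 * b ^ 4 + 16 * b - 4) := ⟨ha, hbval⟩
  obtain ⟨v, _, hv⟩ := intermediate_value_Icc hab hc h0
  exact ⟨v, hv⟩
end

section
/- There exists ε > 0 such that for every real number t with |t| < ε, the curve Y_t has no real points; that is, for all real x, y: x^4 + y^4 + 1 + t·(x^4 + x·y^3 + y + 1) ≠ 0. -/
theorem stmt_6 : ∃ ε : ℝ, 0 < ε ∧ ∀ t : ℝ, |t| < ε → ∀ x y : ℝ,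
    x ^ 4 + y ^ 4 + 1 + t * (x ^ 4 + x * y ^ 3 + y + 1) ≠ 0 := by
  refine ⟨1/2, by norm_num, fun t ht x y h => ?_⟩
  set S : ℝ := x ^ 4 + y ^ 4 + 1 with hSdef
  have hS : (0:ℝ) < S := by positivity
  have h1 : |x * y ^ 3| ≤ x ^ 4 + y ^ 4 := by
    rw [abs_le]
    constructor <;> nlinarith [sq_nonneg (x^2 - y^2), sq_nonneg (x*y + y^2),
      sq_nonneg (x*y - y^2), sq_nonneg (x^2 + y^2), sq_nonneg x, sq_nonneg y]
  have h2 : |y| ≤ y ^ 4 + 1 := by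
    rw [abs_le]
    constructor <;> nlinarith [sq_nonneg (y^2 - 1), sq_nonneg (y + 1), sq_nonneg (y - 1)]
  have hA : |x ^ 4 + x * y ^ 3 + y + 1| ≤ 2 * S := by
    calc |x ^ 4 + x * y ^ 3 + y + 1| ≤ |x ^ 4| + |x * y ^ 3| + |y| + |1| := by
          exact (abs_add_le _ _).trans (by
            gcongr
            exact (abs_add_le _ _).trans (by gcongr; exact abs_add_le _ _))
      _ ≤ x ^ 4 + (x ^ 4 + y ^ 4) + (y ^ 4 + 1) + 1 := by
          have : |x ^ 4| = x ^ 4 := abs_of_nonneg (by positivity)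
          rw [this, abs_one]; gcongr
      _ = 2 * S := by rw [hSdef]; ring
  have hlt : |t * (x ^ 4 + x * y ^ 3 + y + 1)| < S := by
    rw [abs_mul]
    calc |t| * |x ^ 4 + x * y ^ 3 + y + 1| ≤ |t| * (2 * S) := by
          gcongr
      _ < (1/2) * (2 * S) := by
          apply mul_lt_mul_of_pos_right ht (by positivity)
      _ = S := by ring
  have := neg_abs_le (t * (x ^ 4 + x * y ^ 3 + y + 1))
  linarith
end

section
/- For every real number t with t ≥ 20, the curve Y_t has a real point whose x-coordinate lies in the closed interval [1,2]; that is, there exist real x, y with 1 ≤ x ≤ 2 and x^4 + y^4 + 1 + t·(x^4 + x·y^3 + y + 1) = 0. -/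
theorem stmt_7 : ∀ t : ℝ, 20 ≤ t → ∃ x y : ℝ, 1 ≤ x ∧ x ≤ 2 ∧
    x ^ 4 + y ^ 4 + 1 + t * (x ^ 4 + x * y ^ 3 + y + 1) = 0 := by
  intro t ht
  set f : ℝ → ℝ := fun y => (1:ℝ) ^ 4 + y ^ 4 + 1 + t * ((1:ℝ) ^ 4 + 1 * y ^ 3 + y + 1)
    with hf
  have hcont : ContinuousOn f (Set.Icc (-(t+1)) (-2)) := by
    apply Continuous.continuousOn
    fun_prop
  have hab : (-(t+1) : ℝ) ≤ -2 := by linarith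
  have h1 : f (-2) ≤ 0 := by
    simp only [hf]
    nlinarith
  have h2 : 0 ≤ f (-(t+1)) := by
    simp only [hf]
    nlinarith [pow_pos (show (0:ℝ) < t + 1 by linarith) 3, sq_nonneg t,
      sq_nonneg (t+1), sq_nonneg (t-1)]
  have := intermediate_value_Icc' hab hcont
  have h0 : (0:ℝ) ∈ Set.Icc (f (-2)) (f (-(t+1))) := ⟨h1, h2⟩
  obtain ⟨y, _, hy⟩ := this h0
  exact ⟨1, y, le_refl 1, by norm_num, hy⟩
end

section
/- There is no faithful functor from the category of simple graphs on the vertex set ℕ (with graph embeddings as morphisms) to the category of linear orders (with monotone maps as morphisms). -/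
open CategoryTheory

/-- The category of simple graphs with vertex set ℕ, with graph embeddings
(isomorphisms onto induced subgraphs) as morphisms. -/
def NatGraphCat : Type := SimpleGraph ℕ

instance : Category NatGraphCat where
  Hom G H := (G : SimpleGraph ℕ) ↪g (H : SimpleGraph ℕ)
  id G := SimpleGraph.Embedding.refl
  comp f g := g.comp f
  id_comp f := RelEmbedding.ext fun _ => rfl
  comp_id f := RelEmbedding.ext fun _ => rfl
  assoc f g h := RelEmbedding.ext fun _ => rfl

/-- In a linear order, a monotone involution is the identity. -/
lemma monotone_involution_eq_id {α : Type*} [LinearOrder α] (f : α → α)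
    (hf : Monotone f) (h2 : ∀ x, f (f x) = x) : ∀ x, f x = x := by
  intro x
  rcases lt_trichotomy (f x) x with h | h | h
  · have := hf h.le
    rw [h2] at this
    exact absurd this (not_le.mpr h)
  · exact h
  · have := hf h.le
    rw [h2] at this
    exact absurd this (not_le.mpr h)

/-- There is no faithful functor from the category of simple graphs on ℕ to the
category of linear orders with monotone maps. -/
theorem stmt_9 : ∀ F : NatGraphCat ⥤ LinOrd, ¬ F.Faithful := by
  intro F hF
  set G : NatGraphCat := (⊥ : SimpleGraph ℕ) with hG
  let σ : G ⟶ G := ⟨(Equiv.swap 0 1).toEmbedding, by simp [hG]⟩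
  have hσσ : σ ≫ σ = 𝟙 G := RelEmbedding.ext fun x => Equiv.swap_apply_self 0 1 x
  have h2 : F.map σ ≫ F.map σ = 𝟙 (F.obj G) := by
    rw [← F.map_comp, hσσ, F.map_id]
  have key : F.map σ = 𝟙 (F.obj G) := by
    refine LinOrd.hom_ext (OrderHom.ext _ _ (funext fun x => ?_))
    refine monotone_involution_eq_id (show ↑(F.obj G) →o ↑(F.obj G) from (F.map σ).hom)
      (show ↑(F.obj G) →o ↑(F.obj G) from (F.map σ).hom).monotone (fun y => ?_) x
    exact congrArg (fun g : F.obj G ⟶ F.obj G => (show ↑(F.obj G) →o ↑(F.obj G) from g.hom) y) h2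
  have : σ = 𝟙 G := hF.map_injective (by rw [key, F.map_id])
  have h01 : σ.toFun 0 = (𝟙 G : G ⟶ G).toFun 0 := by rw [this]
  simp only [σ, Equiv.toEmbedding, Equiv.swap_apply_left] at h01
  exact one_ne_zero h01
end

section
/- The polynomial u^4 + 16uv^3 + 10v^4 + 16v − 4, regarded as a polynomial in two variables over the algebraic closure of ℚ, is irreducible; that is, the curve X : u^4 + 16uv^3 + 10v^4 + 16v − 4 = 0 is geometrically integral over ℚ. -/
namespace Stmt12Aux

open Polynomial

variable (K : Type*) [Field K] [CharZero K]

lemma eq_quad {R : Type*} [CommRing R] (p : R[X]) (hm : p.Monic) (h : p.natDegree = 2) :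
    p = X ^ 2 + C (p.coeff 1) * X + C (p.coeff 0) := by
  ext n
  match n with
  | 0 => simp [coeff_X_pow]
  | 1 => simp [coeff_X_pow]
  | 2 =>
    have := hm.coeff_natDegree
    rw [h] at this
    simp [coeff_X_pow, this]
  | (n+3) =>
    rw [coeff_eq_zero_of_natDegree_lt (by omega)]
    simp [coeff_X_pow]

lemma quartic_aux (t : Polynomial K) :
    t ^ 4 + 16 * X ^ 3 * t + (10 * X ^ 4 + 16 * X - 4) ≠ 0 := by
  intro h
  by_cases hd : t.natDegree ≤ 1
  · obtain ⟨a, b, rfl⟩ := exists_eq_X_add_C_of_natDegree_le_one hd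
    have hE : C (a^4 + 16*a + 10) * X^4 + C (4*a^3*b + 16*b) * X^3 + C (6*a^2*b^2) * X^2
        + C (4*a*b^3 + 16) * X + C (b^4 - 4) = (0 : Polynomial K) := by
      simp only [map_add, map_mul, map_pow, map_sub, map_ofNat]
      linear_combination h
    have hc2 : 6*a^2*b^2 = 0 := by
      have := congrArg (fun p => Polynomial.coeff p 2) hE
      simp only [coeff_add, coeff_sub, coeff_C_mul, coeff_X_pow, coeff_C, coeff_X,
        coeff_zero, Nat.reduceEqDiff, reduceIte] at this
      linear_combination this
    have hab : a * b = 0 := by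
      have h2 : (a*b)^2 = 0 := by linear_combination hc2 / 6
      exact pow_eq_zero_iff two_ne_zero |>.mp h2
    have hc1 : 4*a*b^3 + 16 = 0 := by
      have := congrArg (fun p => Polynomial.coeff p 1) hE
      simp only [coeff_add, coeff_sub, coeff_C_mul, coeff_X_pow, coeff_C, coeff_X,
        coeff_zero, Nat.reduceEqDiff, reduceIte] at this
      linear_combination this
    have : (16 : K) = 0 := by linear_combination hc1 - 4*b^2*hab
    norm_num at this
  · push_neg at hd
    have ht0 : t ≠ 0 := by intro h0; rw [h0] at hd; simp at hd
    have h4 := congrArg (fun p => Polynomial.coeff p (4 * t.natDegree)) h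
    rw [coeff_add, coeff_add, coeff_zero] at h4
    have e1 : (t^4).coeff (4 * t.natDegree) = t.leadingCoeff ^ 4 := by
      rw [show 4 * t.natDegree = (t^4).natDegree by rw [natDegree_pow], coeff_natDegree,
        leadingCoeff_pow]
    have e2 : (16 * X ^ 3 * t : Polynomial K).coeff (4 * t.natDegree) = 0 := by
      apply coeff_eq_zero_of_natDegree_lt
      calc (16 * X ^ 3 * t : Polynomial K).natDegree
          ≤ (16 * X ^ 3 : Polynomial K).natDegree + t.natDegree := natDegree_mul_le
        _ ≤ 3 + t.natDegree := by
            have : (16 * X ^ 3 : Polynomial K).natDegree ≤ 3 := by compute_degree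
            omega
        _ < 4 * t.natDegree := by omega
    have e3 : (10 * X ^ 4 + 16 * X - 4 : Polynomial K).coeff (4 * t.natDegree) = 0 := by
      apply coeff_eq_zero_of_natDegree_lt
      have : (10 * X ^ 4 + 16 * X - 4 : Polynomial K).natDegree ≤ 4 := by compute_degree
      omega
    rw [e1, e2, e3] at h4
    have : t.leadingCoeff = 0 := by
      have := pow_eq_zero_iff (n := 4) (by norm_num) |>.mp (by linear_combination h4)
      exact this
    exact ht0 (leadingCoeff_eq_zero.mp this)

lemma sextic_aux (A : Polynomial K) :
    A ^ 6 - 4 * A ^ 2 * (10 * X ^ 4 + 16 * X - 4) - 256 * X ^ 6 ≠ 0 := by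
  intro h
  by_cases hd : A.natDegree ≤ 1
  · obtain ⟨a, b, rfl⟩ := exists_eq_X_add_C_of_natDegree_le_one hd
    have hE : C (a^6 - 40*a^2 - 256) * X^6 + C (6*a^5*b - 80*a*b) * X^5
        + C (15*a^4*b^2 - 40*b^2) * X^4 + C (20*a^3*b^3 - 64*a^2) * X^3
        + C (15*a^2*b^4 - 128*a*b + 16*a^2) * X^2 + C (6*a*b^5 - 64*b^2 + 32*a*b) * X
        + C (b^6 + 16*b^2) = (0 : Polynomial K) := by
      simp only [map_add, map_mul, map_pow, map_sub, map_ofNat]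
      linear_combination h
    have g6 : a^6 - 40*a^2 - 256 = 0 := by
      have := congrArg (fun p => Polynomial.coeff p 6) hE
      simp only [coeff_add, coeff_sub, coeff_C_mul, coeff_X_pow, coeff_C, coeff_X,
        coeff_zero, Nat.reduceEqDiff, reduceIte] at this
      linear_combination this
    have g5 : 6*a^5*b - 80*a*b = 0 := by
      have := congrArg (fun p => Polynomial.coeff p 5) hE
      simp only [coeff_add, coeff_sub, coeff_C_mul, coeff_X_pow, coeff_C, coeff_X,
        coeff_zero, Nat.reduceEqDiff, reduceIte] at this
      linear_combination this
    have g4 : 15*a^4*b^2 - 40*b^2 = 0 := by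
      have := congrArg (fun p => Polynomial.coeff p 4) hE
      simp only [coeff_add, coeff_sub, coeff_C_mul, coeff_X_pow, coeff_C, coeff_X,
        coeff_zero, Nat.reduceEqDiff, reduceIte] at this
      linear_combination this
    have g3 : 20*a^3*b^3 - 64*a^2 = 0 := by
      have := congrArg (fun p => Polynomial.coeff p 3) hE
      simp only [coeff_add, coeff_sub, coeff_C_mul, coeff_X_pow, coeff_C, coeff_X,
        coeff_zero, Nat.reduceEqDiff, reduceIte] at this
      linear_combination this
    by_cases hb : b = 0
    · subst hb
      have ha2 : a^2 = 0 := by linear_combination (-1/64 : K) * g3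
      have ha : a = 0 := pow_eq_zero_iff two_ne_zero |>.mp ha2
      subst ha
      have : (256 : K) = 0 := by linear_combination -g6
      norm_num at this
    · have h4 : 15*a^4 - 40 = 0 := by
        have hb2 : b^2 ≠ 0 := pow_ne_zero 2 hb
        have hh : b^2 * (15*a^4 - 40) = 0 := by linear_combination g4
        rcases mul_eq_zero.mp hh with h' | h'
        · exact absurd h' hb2
        · exact h'
      have ha : a ≠ 0 := by
        intro h0; rw [h0] at h4; norm_num at h4
      have h5 : 6*a^4 - 80 = 0 := by
        have hh : (a*b) * (6*a^4 - 80) = 0 := by linear_combination g5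
        rcases mul_eq_zero.mp hh with h' | h'
        · exact absurd h' (mul_ne_zero ha hb)
        · exact h'
      have : (960 : K) = 0 := by linear_combination 6*h4 - 15*h5
      norm_num at this
  · push_neg at hd
    have hA0 : A ≠ 0 := by intro h0; rw [h0] at hd; simp at hd
    have h6 := congrArg (fun p => Polynomial.coeff p (6 * A.natDegree)) h
    rw [coeff_sub, coeff_sub, coeff_zero] at h6
    have e1 : (A^6).coeff (6 * A.natDegree) = A.leadingCoeff ^ 6 := by
      rw [show 6 * A.natDegree = (A^6).natDegree by rw [natDegree_pow], coeff_natDegree,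
        leadingCoeff_pow]
    have e2 : (4 * A ^ 2 * (10 * X ^ 4 + 16 * X - 4) : Polynomial K).coeff (6 * A.natDegree)
        = 0 := by
      apply coeff_eq_zero_of_natDegree_lt
      calc (4 * A ^ 2 * (10 * X ^ 4 + 16 * X - 4) : Polynomial K).natDegree
          ≤ (4 * A ^ 2 : Polynomial K).natDegree
            + (10 * X ^ 4 + 16 * X - 4 : Polynomial K).natDegree := natDegree_mul_le
        _ ≤ (4 * A ^ 2 : Polynomial K).natDegree + 4 := by
            have : (10 * X ^ 4 + 16 * X - 4 : Polynomial K).natDegree ≤ 4 := by compute_degree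
            omega
        _ ≤ ((4:Polynomial K).natDegree + (A^2).natDegree) + 4 := by
            have := natDegree_mul_le (p := (4 : Polynomial K)) (q := A^2)
            omega
        _ < 6 * A.natDegree := by
            simp only [natDegree_ofNat, natDegree_pow]
            omega
    have e3 : (256 * X ^ 6 : Polynomial K).coeff (6 * A.natDegree) = 0 := by
      apply coeff_eq_zero_of_natDegree_lt
      have : (256 * X ^ 6 : Polynomial K).natDegree ≤ 6 := by compute_degree
      omega
    rw [e1, e2, e3] at h6
    have : A.leadingCoeff = 0 := by
      have := pow_eq_zero_iff (n := 6) (by norm_num) |>.mp (by linear_combination h6)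
      exact this
    exact hA0 (leadingCoeff_eq_zero.mp this)

theorem main_irr :
    Irreducible (X ^ 4 + C (16 * X ^ 3) * X + C (10 * X ^ 4 + 16 * X - 4) :
      Polynomial (Polynomial K)) := by
  set q : Polynomial (Polynomial K) :=
    X ^ 4 + C (16 * X ^ 3) * X + C (10 * X ^ 4 + 16 * X - 4) with hqdef
  have hdeg : q.natDegree = 4 := by
    rw [hqdef]
    compute_degree!
  have hqm : q.Monic := by
    have hq4 : q.coeff 4 = 1 := by
      rw [hqdef]
      simp only [coeff_add, coeff_C_mul, coeff_X_pow, coeff_C, coeff_X]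
      norm_num
    rw [Monic, leadingCoeff, hdeg]
    exact hq4
  constructor
  · exact not_isUnit_of_natDegree_pos q (by omega)
  · rintro f g hq
    by_contra hcon
    push_neg at hcon
    obtain ⟨hf, hg⟩ := hcon
    have hq0 : q ≠ 0 := hqm.ne_zero
    have hf0 : f ≠ 0 := by rintro rfl; simp at hq; exact hq0 hq
    have hg0 : g ≠ 0 := by rintro rfl; simp at hq; exact hq0 hq
    have hlc : f.leadingCoeff * g.leadingCoeff = 1 := by
      rw [← leadingCoeff_mul, ← hq]; exact hqm
    set F := C g.leadingCoeff * f with hFdef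
    set G := C f.leadingCoeff * g with hGdef
    have hFm : F.Monic := by
      rw [Monic, hFdef, leadingCoeff_mul, leadingCoeff_C, mul_comm]; exact hlc
    have hGm : G.Monic := by
      rw [Monic, hGdef, leadingCoeff_mul, leadingCoeff_C]; exact hlc
    have hFG : F * G = q := by
      have h1 : C (f.leadingCoeff * g.leadingCoeff) = (1 : Polynomial (Polynomial K)) := by
        rw [hlc, map_one]
      have h2 : F * G = C (f.leadingCoeff * g.leadingCoeff) * (f * g) := by
        rw [hFdef, hGdef, C_mul]; ring
      rw [h2, h1, one_mul, hq]
    have hdF : F.natDegree = f.natDegree := by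
      rw [hFdef, natDegree_C_mul (leadingCoeff_ne_zero.mpr hg0)]
    have hdG : G.natDegree = g.natDegree := by
      rw [hGdef, natDegree_C_mul (leadingCoeff_ne_zero.mpr hf0)]
    have hsum : F.natDegree + G.natDegree = 4 := by
      rw [← natDegree_mul (hFm.ne_zero) (hGm.ne_zero), hFG, hdeg]
    have hFpos : 0 < F.natDegree := by
      rcases Nat.eq_zero_or_pos F.natDegree with h0 | h0
      · exfalso
        rw [hdF] at h0
        have hfu : IsUnit f.leadingCoeff := IsUnit.of_mul_eq_one _ hlc
        have : f = C (f.coeff 0) := eq_C_of_natDegree_eq_zero h0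
        rw [leadingCoeff, h0] at hfu
        exact hf (this ▸ isUnit_C.mpr hfu)
      · exact h0
    have hGpos : 0 < G.natDegree := by
      rcases Nat.eq_zero_or_pos G.natDegree with h0 | h0
      · exfalso
        rw [hdG] at h0
        have hgu : IsUnit g.leadingCoeff :=
          IsUnit.of_mul_eq_one _ (by rw [mul_comm]; exact hlc)
        have : g = C (g.coeff 0) := eq_C_of_natDegree_eq_zero h0
        rw [leadingCoeff, h0] at hgu
        exact hg (this ▸ isUnit_C.mpr hgu)
      · exact h0
    -- a common helper for the linear-factor case
    have lin_case : ∀ P Q' : Polynomial (Polynomial K), P.Monic → P.natDegree = 1 →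
        P * Q' = q → False := by
      intro P Q' hPm hP1 hPQ
      have hP : P = X + C (P.coeff 0) := hPm.eq_X_add_C hP1
      have hdvd : X - C (-(P.coeff 0)) ∣ q := by
        rw [map_neg, sub_neg_eq_add, ← hP]
        exact ⟨Q', hPQ.symm⟩
      have hroot := dvd_iff_isRoot.mp hdvd
      rw [IsRoot, hqdef] at hroot
      simp only [eval_add, eval_mul, eval_pow, eval_C, eval_X] at hroot
      exact quartic_aux K (-(P.coeff 0)) (by linear_combination hroot)
    have hcase : F.natDegree = 1 ∨ F.natDegree = 2 ∨ F.natDegree = 3 := by omega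
    rcases hcase with h1 | h2 | h3
    · exact lin_case F G hFm h1 hFG
    · -- quadratic case
      have hG2 : G.natDegree = 2 := by omega
      have hFq := eq_quad F hFm h2
      have hGq := eq_quad G hGm hG2
      set A := F.coeff 1 with hA
      set B := F.coeff 0 with hB
      set A' := G.coeff 1 with hA'
      set B' := G.coeff 0 with hB'
      have hexp : (X^2 + C A * X + C B) * (X^2 + C A' * X + C B') = q := by
        rw [← hFq, ← hGq]; exact hFG
      have he : X^4 + C (A + A') * X^3 + C (B + B' + A*A') * X^2 + C (A*B' + B*A') * X
          + C (B*B') = q := by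
        rw [← hexp]
        simp only [map_add, map_mul]
        ring
      rw [hqdef] at he
      have e3 : A + A' = 0 := by
        have := congrArg (fun p => Polynomial.coeff p 3) he
        simp only [coeff_add, coeff_sub, coeff_C_mul, coeff_X_pow, coeff_C, coeff_X,
          coeff_zero, Nat.reduceEqDiff, reduceIte] at this
        linear_combination this
      have e2 : B + B' + A*A' = 0 := by
        have := congrArg (fun p => Polynomial.coeff p 2) he
        simp only [coeff_add, coeff_sub, coeff_C_mul, coeff_X_pow, coeff_C, coeff_X,
          coeff_zero, Nat.reduceEqDiff, reduceIte] at this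
        linear_combination this
      have e1 : A*B' + B*A' = 16 * X^3 := by
        have := congrArg (fun p => Polynomial.coeff p 1) he
        simp only [coeff_add, coeff_sub, coeff_C_mul, coeff_X_pow, coeff_C, coeff_X,
          coeff_zero, Nat.reduceEqDiff, reduceIte] at this
        linear_combination this
      have e0 : B*B' = 10 * X^4 + 16 * X - 4 := by
        have := congrArg (fun p => Polynomial.coeff p 0) he
        simp only [coeff_add, coeff_sub, coeff_C_mul, coeff_X_pow, coeff_C, coeff_X,
          coeff_zero, Nat.reduceEqDiff, reduceIte] at this
        linear_combination this
      have hAn : A' = -A := by linear_combination e3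
      rw [hAn] at e2 e1
      have hm : B + B' = A^2 := by linear_combination e2
      have k1 : 2*A*B = A^3 - 16*X^3 := by linear_combination A*hm - e1
      have k2 : 2*A*B' = A^3 + 16*X^3 := by linear_combination A*hm + e1
      have k3 : (2*A*B) * (2*A*B') = (A^3 - 16*X^3) * (A^3 + 16*X^3) := by
        rw [k1, k2]
      have key : A^6 - 4*A^2*(10 * X^4 + 16 * X - 4) - 256*(X : Polynomial K)^6 = 0 := by
        linear_combination 4*A^2*e0 - k3
      exact sextic_aux K A key
    · have hG1 : G.natDegree = 1 := by omega
      exact lin_case G F hGm hG1 (by rw [mul_comm]; exact hFG)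

end Stmt12Aux

open MvPolynomial

theorem stmt_12 :
    Irreducible (X 0 ^ 4 + 16 * X 0 * X 1 ^ 3 + 10 * X 1 ^ 4 + 16 * X 1 - 4 :
      MvPolynomial (Fin 2) (AlgebraicClosure ℚ)) := by
  classical
  set K := AlgebraicClosure ℚ with hK
  haveI : CharZero K := charZero_of_injective_algebraMap (algebraMap ℚ K).injective
  let E : MvPolynomial (Fin 2) K ≃ₐ[K] Polynomial (Polynomial K) :=
    (MvPolynomial.finSuccEquiv K 1).trans
      (Polynomial.mapAlgEquiv ((MvPolynomial.finSuccEquiv K 0).trans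
        (Polynomial.mapAlgEquiv (MvPolynomial.isEmptyAlgEquiv K (Fin 0)))))
  have hX0 : E (X 0) = Polynomial.X := by
    simp [E, MvPolynomial.finSuccEquiv_X_zero]
  have hX1 : E (X 1) = Polynomial.C Polynomial.X := by
    have h1 : (MvPolynomial.finSuccEquiv K 1) (X (1 : Fin 2)) =
        Polynomial.C (MvPolynomial.X 0) := by
      rw [← Fin.succ_zero_eq_one, MvPolynomial.finSuccEquiv_X_succ]
    simp [E, h1, MvPolynomial.finSuccEquiv_X_zero]
  have himg : E (X 0 ^ 4 + 16 * X 0 * X 1 ^ 3 + 10 * X 1 ^ 4 + 16 * X 1 - 4) =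
      (Polynomial.X ^ 4 + Polynomial.C (16 * Polynomial.X ^ 3) * Polynomial.X
        + Polynomial.C (10 * Polynomial.X ^ 4 + 16 * Polynomial.X - 4) :
        Polynomial (Polynomial K)) := by
    simp only [map_add, map_sub, map_mul, map_pow, map_ofNat, hX0, hX1]
    ring
  exact (MulEquiv.irreducible_iff E).mp (by rw [himg]; exact Stmt12Aux.main_irr K)
end

section
/- Let K be the algebraic closure of the field ℚ(T) of rational functions in one variable over ℚ, and let T denote the image in K of the rational-function variable. Then the polynomial x^4 + y^4 + 1 + T·(x^4 + xy^3 + y + 1), regarded as a polynomial in the two variables x, y over K, is irreducible; that is, the curve Y : q(T,x,y) = 0 is geometrically integral over ℚ(T). -/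
section PRE
open Polynomial



section Helpers

variable {R : Type*} [Semiring R]

lemma aux_coeffs5 {c0 c1 c2 c3 c4 : R}
    (h : C c4 * X ^ 4 + C c3 * X ^ 3 + C c2 * X ^ 2 + C c1 * X + C c0 = 0) :
    c4 = 0 ∧ c3 = 0 ∧ c2 = 0 ∧ c1 = 0 ∧ c0 = 0 := by
  refine ⟨?_, ?_, ?_, ?_, ?_⟩
  · simpa using congrArg (fun p => coeff p 4) h
  · simpa using congrArg (fun p => coeff p 3) h
  · simpa using congrArg (fun p => coeff p 2) h
  · simpa using congrArg (fun p => coeff p 1) h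
  · simpa using congrArg (fun p => coeff p 0) h

lemma aux_coeffs4 {c0 c1 c2 c3 : R}
    (h : C c3 * X ^ 3 + C c2 * X ^ 2 + C c1 * X + C c0 = 0) :
    c3 = 0 ∧ c2 = 0 ∧ c1 = 0 ∧ c0 = 0 := by
  refine ⟨?_, ?_, ?_, ?_⟩
  · simpa using congrArg (fun p => coeff p 3) h
  · simpa using congrArg (fun p => coeff p 2) h
  · simpa using congrArg (fun p => coeff p 1) h
  · simpa using congrArg (fun p => coeff p 0) h

lemma aux_repr2 {p : R[X]} (h : p.natDegree ≤ 2) :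
    p = C (p.coeff 2) * X ^ 2 + C (p.coeff 1) * X + C (p.coeff 0) := by
  ext n
  match n with
  | 0 => simp
  | 1 => simp
  | 2 => simp
  | (n+3) =>
    rw [coeff_eq_zero_of_natDegree_lt (lt_of_le_of_lt h (by omega))]
    simp [coeff_X_pow, coeff_C]

end Helpers

section Scalar

variable {K : Type*} [Field K] [CharZero K]

lemma scalar13 {t a b : K} (ht0 : t ≠ 0) (ht1 : 1 + t ≠ 0)
    (k4 : a ^ 4 + 1 + t - t * a ^ 3 = 0)
    (k3 : 4 * a ^ 3 * b - 3 * t * a ^ 2 * b = 0)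
    (k2 : 6 * a ^ 2 * b ^ 2 - 3 * t * a * b ^ 2 = 0)
    (k1 : 4 * a * b ^ 3 - t * b ^ 3 - t * a = 0) : False := by
  rcases eq_or_ne a 0 with ha | ha
  · exact ht1 (by linear_combination k4 - (a ^ 3 - t * a ^ 2) * ha)
  rcases eq_or_ne b 0 with hb | hb
  · have : t * a = 0 := by linear_combination -k1 + (4 * a * b ^ 2 - t * b ^ 2) * hb
    rcases mul_eq_zero.mp this with h | h
    · exact ht0 h
    · exact ha h
  · have h2 : 3 * a * b ^ 2 * (2 * a - t) = 0 := by linear_combination k2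
    have h2' : 2 * a - t = 0 := by
      rcases mul_eq_zero.mp h2 with h | h
      · rcases mul_eq_zero.mp h with h | h
        · rcases mul_eq_zero.mp h with h | h
          · exact absurd h (by norm_num)
          · exact absurd h ha
        · exact absurd (pow_eq_zero_iff (by norm_num) |>.mp h) hb
      · exact h
    have h3 : 2 * a ^ 3 * b = 0 := by linear_combination -k3 + 3 * a ^ 2 * b * h2'
    rcases mul_eq_zero.mp h3 with h | h
    · rcases mul_eq_zero.mp h with h | h
      · exact absurd h (by norm_num)
      · exact ha (pow_eq_zero_iff (by norm_num) |>.mp h)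
    · exact hb h

lemma scalar22 {t a b r2 r1 r0 w2 w1 w0 : K} (ht0 : t ≠ 0) (ht1 : 1 + t ≠ 0)
    (h22 : r2 + w2 + a * (t - a) = 0)
    (h21 : r1 + w1 - a * b + b * (t - a) = 0)
    (h20 : r0 + w0 - b ^ 2 = 0)
    (h13 : a * w2 + r2 * (t - a) = 0)
    (h11 : a * w0 + b * w1 - r1 * b + r0 * (t - a) = 0)
    (h10 : b * w0 - r0 * b - t = 0)
    (h04 : r2 * w2 - 1 - t = 0)
    (h03 : r2 * w1 + r1 * w2 = 0)
    (h01 : r1 * w0 + r0 * w1 = 0)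
    (h00 : r0 * w0 - 1 - t = 0) : False := by
  have hb : b ≠ 0 := by
    intro hb
    exact ht0 (by linear_combination -h10 + (w0 - r0) * hb)
  have hr0 : 2 * b * r0 - b ^ 3 + t = 0 := by linear_combination b * h20 - h10
  have hw0 : 2 * b * w0 - b ^ 3 - t = 0 := by linear_combination b * h20 + h10
  have hH : b ^ 6 - 4 * (1 + t) * b ^ 2 - t ^ 2 = 0 := by
    linear_combination (-(b ^ 3 + t)) * hr0 - 2 * b * r0 * hw0 + 4 * b ^ 2 * h00
  have hG : 2 * t * r1 - b * (t - 2 * a) * (b ^ 3 - t) = 0 := by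
    linear_combination 2 * b * h01 - r1 * hw0 - w1 * hr0 - (b ^ 3 - t) * h21
  have hC : 4 * b ^ 2 * r1 - (2 * a * t - t ^ 2 + b ^ 3 * (4 * a - t)) = 0 := by
    linear_combination a * hw0 + (t - a) * hr0 + 2 * b ^ 2 * h21 - 2 * b * h11
  have hI : t ^ 2 * (2 * a - t) + t ^ 2 * b ^ 3 - 2 * b ^ 6 * (t - 2 * a) = 0 := by
    linear_combination (-t) * hC + 2 * b ^ 2 * hG
  have hJ : t ^ 2 * b ^ 3 - (t - 2 * a) * (8 * (1 + t) * b ^ 2 + 3 * t ^ 2) = 0 := by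
    linear_combination hI + 2 * (t - 2 * a) * hH
  rcases eq_or_ne t (2 * a) with h2a | h2a
  · have h0 : t ^ 2 * b ^ 3 = 0 := by
      linear_combination hJ + (8 * (1 + t) * b ^ 2 + 3 * t ^ 2) * h2a
    rcases mul_eq_zero.mp h0 with h | h
    · exact ht0 (pow_eq_zero_iff (by norm_num) |>.mp h)
    · exact hb (pow_eq_zero_iff (by norm_num) |>.mp h)
  have h2a' : t - 2 * a ≠ 0 := sub_ne_zero.mpr h2a
  have hApr : r2 * (t - 2 * a) - a ^ 2 * (t - a) = 0 := by
    linear_combination h13 - a * h22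
  have hr2ne : r2 ≠ 0 := by
    intro hr2
    exact ht1 (by linear_combination -h04 + w2 * hr2)
  have hKey : a * (t - a) * (t * r1 + a * b * (t - 2 * a)) = 0 := by
    linear_combination (-(t - 2 * a)) * (h03 - r2 * h21 - r1 * h22) - (2 * r1 + b * (t - 2 * a)) * hApr
  rcases mul_eq_zero.mp hKey with h | hL
  · rcases mul_eq_zero.mp h with ha | hta
    · have : r2 * t = 0 := by linear_combination hApr + (2 * r2 + a * t - a ^ 2) * ha
      rcases mul_eq_zero.mp this with h | h
      · exact hr2ne h
      · exact ht0 h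
    · have : r2 * (t - 2 * a) = 0 := by linear_combination hApr + a ^ 2 * hta
      rcases mul_eq_zero.mp this with h | h
      · exact hr2ne h
      · exact h2a' h
  · have hMpre : b * (t - 2 * a) * (b ^ 3 - t + 2 * a) = 0 := by
      linear_combination 2 * hL - hG
    have hM : b ^ 3 - t + 2 * a = 0 := by
      rcases mul_eq_zero.mp hMpre with h | h
      · rcases mul_eq_zero.mp h with h | h
        · exact absurd h hb
        · exact absurd h h2a'
      · exact h
    have hNpre : (t - 2 * a) * (8 * (1 + t) * b ^ 2 + 2 * t ^ 2) = 0 := by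
      linear_combination -hJ + t ^ 2 * hM
    have hN : 8 * (1 + t) * b ^ 2 + 2 * t ^ 2 = 0 := by
      rcases mul_eq_zero.mp hNpre with h | h
      · exact absurd h h2a'
      · exact h
    have hb6 : b ^ 6 = 0 := by linear_combination hH + (1 / 2 : K) * hN
    exact hb (pow_eq_zero_iff (by norm_num) |>.mp hb6)

end Scalar
open Polynomial

set_option linter.unusedSectionVars false

section PolyLevel
variable {K : Type*} [Field K] [CharZero K]

lemma aux_ne1 {t : K} (ht1 : 1 + t ≠ 0) : (1 + C t : K[X]) ≠ 0 := by
  intro h0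
  exact ht1 (by simpa [coeff_one] using congrArg (fun q => coeff q 0) h0)

lemma aux_ne2 : (X ^ 4 + 1 : K[X]) ≠ 0 := by
  intro h0
  simpa [coeff_one, coeff_X_pow] using congrArg (fun q => coeff q 4) h0

lemma aux_deg4 {t : K} (ht1 : 1 + t ≠ 0) :
    ((1 + C t) * (X ^ 4 + 1) : K[X]).natDegree = 4 := by
  have h1 : (1 + C t : K[X]) = C (1 + t) := by rw [map_add, C_1]
  have h2 : (X ^ 4 + 1 : K[X]) = X ^ 4 + C 1 := by rw [C_1]
  rw [h1, natDegree_C_mul ht1, h2, natDegree_X_pow_add_C]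

lemma noLinPoly {t : K} (ht0 : t ≠ 0) (ht1 : 1 + t ≠ 0)
    (p : K[X])
    (h : p ^ 4 - C t * X * p ^ 3 - C t * p + (1 + C t) * (X ^ 4 + 1) = 0) : False := by
  have hp0 : p ≠ 0 := by
    rintro rfl
    have h' : ((1 + C t) * (X ^ 4 + 1) : K[X]) = 0 := by linear_combination h
    rcases mul_eq_zero.mp h' with h'' | h''
    exacts [aux_ne1 ht1 h'', aux_ne2 h'']
  have hdp : p.natDegree ≤ 1 := by
    by_contra hn
    push_neg at hn
    have h4 : p ^ 4 = C t * X * p ^ 3 + C t * p - (1 + C t) * (X ^ 4 + 1) := by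
      linear_combination h
    have hL : (p ^ 4).natDegree = 4 * p.natDegree := natDegree_pow p 4
    have hb1 : (C t * X * p ^ 3).natDegree ≤ 1 + 3 * p.natDegree := by
      refine le_trans natDegree_mul_le ?_
      have h1 : (C t * X : K[X]).natDegree ≤ 1 :=
        le_trans (natDegree_C_mul_le t X) natDegree_X_le
      have h2 : (p ^ 3).natDegree = 3 * p.natDegree := natDegree_pow p 3
      omega
    have hb2 : (C t * p).natDegree ≤ p.natDegree := natDegree_C_mul_le t p
    have hb3 : ((1 + C t) * (X ^ 4 + 1) : K[X]).natDegree ≤ 4 := le_of_eq (aux_deg4 ht1)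
    have hbig : (C t * X * p ^ 3 + C t * p - (1 + C t) * (X ^ 4 + 1)).natDegree ≤
        max (max (1 + 3 * p.natDegree) p.natDegree) 4 := by
      refine le_trans (natDegree_sub_le _ _) ?_
      refine max_le_max ?_ hb3
      refine le_trans (natDegree_add_le _ _) (max_le_max hb1 hb2)
    rw [← h4, hL] at hbig
    omega
  have hrep := eq_X_add_C_of_degree_le_one (natDegree_le_iff_degree_le.mp hdp)
  set a := p.coeff 1
  set b := p.coeff 0
  rw [hrep] at h
  have hcanon : C (a ^ 4 + 1 + t - t * a ^ 3) * X ^ 4 + C (4 * a ^ 3 * b - 3 * t * a ^ 2 * b) * X ^ 3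
      + C (6 * a ^ 2 * b ^ 2 - 3 * t * a * b ^ 2) * X ^ 2
      + C (4 * a * b ^ 3 - t * b ^ 3 - t * a) * X + C (b ^ 4 + 1 - t * b + t) = 0 := by
    simp only [map_add, map_sub, map_mul, map_pow, map_one, map_ofNat]
    linear_combination h
  obtain ⟨k4', k3', k2', k1', k0'⟩ := aux_coeffs5 hcanon
  exact scalar13 ht0 ht1 k4' k3' k2' k1'

end PolyLevel

section S3
variable {K : Type*} [Field K] [CharZero K]

lemma noQuad {t : K} (ht0 : t ≠ 0) (ht1 : 1 + t ≠ 0)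
    (pp ss rr ww : K[X])
    (E3 : pp + ss - C t * X = 0)
    (E2 : rr + ww + pp * ss = 0)
    (E1 : pp * ww + rr * ss - C t = 0)
    (E0 : rr * ww - (1 + C t) * (X ^ 4 + 1) = 0) : False := by
  have hE0 : rr * ww = (1 + C t) * (X ^ 4 + 1) := by linear_combination E0
  have hrhs : ((1 + C t) * (X ^ 4 + 1) : K[X]) ≠ 0 := mul_ne_zero (aux_ne1 ht1) aux_ne2
  have hrr0 : rr ≠ 0 := by rintro rfl; rw [zero_mul] at hE0; exact hrhs hE0.symm
  have hww0 : ww ≠ 0 := by rintro rfl; rw [mul_zero] at hE0; exact hrhs hE0.symm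
  have hdeg4 : rr.natDegree + ww.natDegree = 4 := by
    rw [← natDegree_mul hrr0 hww0, hE0, aux_deg4 ht1]
  have hE3 : ss = C t * X - pp := by linear_combination E3
  have hE2 : rr + ww = -(pp * ss) := by linear_combination E2
  have hE1 : pp * ww + rr * ss = C t := by linear_combination E1
  have hdpp : pp.natDegree ≤ 1 := by
    by_contra hn
    push_neg at hn
    have hppne : pp ≠ 0 := by
      intro h0; rw [h0, natDegree_zero] at hn; omega
    have hdss : ss.natDegree = pp.natDegree := by
      rw [hE3]
      exact natDegree_sub_eq_right_of_natDegree_lt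
        (lt_of_le_of_lt (le_trans (natDegree_C_mul_le t X) natDegree_X_le) hn)
    have hssne : ss ≠ 0 := by
      intro h0; rw [h0, natDegree_zero] at hdss; omega
    have hd2 : (rr + ww).natDegree = pp.natDegree + ss.natDegree := by
      rw [hE2, natDegree_neg, natDegree_mul hppne hssne]
    have hle4 : (rr + ww).natDegree ≤ 4 := by
      refine le_trans (natDegree_add_le _ _) (max_le (by omega) (by omega))
    have hdpp2 : pp.natDegree = 2 := by omega
    have h44 : (rr + ww).natDegree = 4 := by omega
    have hmax : 4 ≤ max rr.natDegree ww.natDegree := h44 ▸ natDegree_add_le rr ww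
    rcases le_max_iff.mp hmax with hr4 | hw4
    · -- rr.natDegree = 4, ww.natDegree = 0
      have hrs : (rr * ss).natDegree = 6 := by
        rw [natDegree_mul hrr0 hssne]; omega
      have hpw : (pp * ww).natDegree ≤ 2 := by
        refine le_trans natDegree_mul_le ?_; omega
      have h6 : (pp * ww + rr * ss).natDegree = 6 := by
        rw [natDegree_add_eq_right_of_natDegree_lt (by omega)]; exact hrs
      rw [hE1, natDegree_C] at h6
      omega
    · have hpw : (pp * ww).natDegree = 6 := by
        rw [natDegree_mul hppne hww0]; omega
      have hrs : (rr * ss).natDegree ≤ 2 := by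
        refine le_trans natDegree_mul_le ?_; omega
      have h6 : (pp * ww + rr * ss).natDegree = 6 := by
        rw [natDegree_add_eq_left_of_natDegree_lt (by omega)]; exact hpw
      rw [hE1, natDegree_C] at h6
      omega
  have hdss : ss.natDegree ≤ 1 := by
    rw [hE3]
    refine le_trans (natDegree_sub_le _ _) (max_le ?_ hdpp)
    exact le_trans (natDegree_C_mul_le t X) natDegree_X_le
  have hdrr : rr.natDegree ≤ 2 := by
    by_contra hn
    push_neg at hn
    have h1 : (rr + ww).natDegree = rr.natDegree :=
      natDegree_add_eq_left_of_natDegree_lt (by omega)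
    rw [hE2, natDegree_neg] at h1
    have h2 : (pp * ss).natDegree ≤ 2 := le_trans natDegree_mul_le (by omega)
    omega
  have hdww : ww.natDegree ≤ 2 := by
    by_contra hn
    push_neg at hn
    have h1 : (rr + ww).natDegree = ww.natDegree :=
      natDegree_add_eq_right_of_natDegree_lt (by omega)
    rw [hE2, natDegree_neg] at h1
    have h2 : (pp * ss).natDegree ≤ 2 := le_trans natDegree_mul_le (by omega)
    omega
  -- representations
  have hpprep := eq_X_add_C_of_degree_le_one (natDegree_le_iff_degree_le.mp hdpp)
  have hssrep := eq_X_add_C_of_degree_le_one (natDegree_le_iff_degree_le.mp hdss)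
  have hrrrep := aux_repr2 hdrr
  have hwwrep := aux_repr2 hdww
  set a := pp.coeff 1; set b := pp.coeff 0
  set c := ss.coeff 1; set d := ss.coeff 0
  set r2 := rr.coeff 2; set r1 := rr.coeff 1; set r0 := rr.coeff 0
  set w2 := ww.coeff 2; set w1 := ww.coeff 1; set w0 := ww.coeff 0
  rw [hpprep, hssrep] at E3 E2 E1
  rw [hrrrep] at E2 E1 E0
  rw [hwwrep] at E2 E1 E0
  have c3 : C (0 : K) * X ^ 4 + C 0 * X ^ 3 + C 0 * X ^ 2 + C (a + c - t) * X + C (b + d) = 0 := by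
    simp only [map_add, map_sub, map_mul, map_pow, map_one, map_zero, map_ofNat]
    linear_combination E3
  have c2 : C (0 : K) * X ^ 4 + C 0 * X ^ 3 + C (r2 + w2 + a * c) * X ^ 2
      + C (r1 + w1 + a * d + b * c) * X + C (r0 + w0 + b * d) = 0 := by
    simp only [map_add, map_sub, map_mul, map_pow, map_one, map_zero, map_ofNat]
    linear_combination E2
  have c1 : C (0 : K) * X ^ 4 + C (a * w2 + r2 * c) * X ^ 3
      + C (a * w1 + b * w2 + r2 * d + r1 * c) * X ^ 2
      + C (a * w0 + b * w1 + r1 * d + r0 * c) * X + C (b * w0 + r0 * d - t) = 0 := by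
    simp only [map_add, map_sub, map_mul, map_pow, map_one, map_zero, map_ofNat]
    linear_combination E1
  have c0 : C (r2 * w2 - (1 + t)) * X ^ 4 + C (r2 * w1 + r1 * w2) * X ^ 3
      + C (r2 * w0 + r1 * w1 + r0 * w2) * X ^ 2
      + C (r1 * w0 + r0 * w1) * X + C (r0 * w0 - (1 + t)) = 0 := by
    simp only [map_add, map_sub, map_mul, map_pow, map_one, map_zero, map_ofNat]
    linear_combination E0
  obtain ⟨-, -, -, hA, hB⟩ := aux_coeffs5 c3
  obtain ⟨-, -, g22, g21, g20⟩ := aux_coeffs5 c2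
  obtain ⟨-, g13, g12, g11, g10⟩ := aux_coeffs5 c1
  obtain ⟨g04, g03, g02, g01, g00⟩ := aux_coeffs5 c0
  refine scalar22 ht0 ht1
    (show r2 + w2 + a * (t - a) = 0 by linear_combination g22 - a * hA)
    (show r1 + w1 - a * b + b * (t - a) = 0 by linear_combination g21 - a * hB - b * hA)
    (show r0 + w0 - b ^ 2 = 0 by linear_combination g20 - b * hB)
    (show a * w2 + r2 * (t - a) = 0 by linear_combination g13 - r2 * hA)
    (show a * w0 + b * w1 - r1 * b + r0 * (t - a) = 0 by linear_combination g11 - r1 * hB - r0 * hA)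
    (show b * w0 - r0 * b - t = 0 by linear_combination g10 - r0 * hB)
    (show r2 * w2 - 1 - t = 0 by linear_combination g04)
    g03 g01
    (show r0 * w0 - 1 - t = 0 by linear_combination g00)
end S3

section S4
variable {K : Type*} [Field K] [CharZero K]

lemma keyIrr {t : K} (ht0 : t ≠ 0) (ht1 : 1 + t ≠ 0) :
    Irreducible ((X : (K[X])[X]) ^ 4 + C (C t * X) * X ^ 3 + C (C t) * X
      + C ((1 + C t) * (X ^ 4 + 1))) := by
  set QY : (K[X])[X] := X ^ 4 + C (C t * X) * X ^ 3 + C (C t) * X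
      + C ((1 + C t) * (X ^ 4 + 1)) with hQYdef
  have hrw : QY = X ^ 4 + (C (C t * X) * X ^ 3 + C (C t) * X
      + C ((1 + C t) * (X ^ 4 + 1))) := by rw [hQYdef]; ring
  have hrest : (C (C t * X) * X ^ 3 + C (C t) * X
      + C ((1 + C t) * (X ^ 4 + 1)) : (K[X])[X]).natDegree ≤ 3 := by
    refine le_trans (natDegree_add_le _ _) (max_le (le_trans (natDegree_add_le _ _)
      (max_le ?_ ?_)) ?_)
    · refine le_trans natDegree_mul_le ?_
      simp only [natDegree_C, natDegree_X_pow]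
      try omega
    · refine le_trans natDegree_mul_le ?_
      simp only [natDegree_C, natDegree_X]
      try omega
    · simp only [natDegree_C]
      try omega
  have hdeg : QY.natDegree = 4 := by
    rw [hrw, natDegree_add_eq_left_of_natDegree_lt, natDegree_X_pow]
    rw [natDegree_X_pow]
    omega
  have hmon : QY.Monic := by
    rw [hrw]
    refine monic_X_pow_add ?_
    refine lt_of_le_of_lt (degree_le_natDegree) ?_
    exact_mod_cast lt_of_le_of_lt (Nat.cast_le.mpr hrest) (by norm_num : ((3:ℕ) : WithBot ℕ) < 4)
  constructor
  · intro hu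
    have := natDegree_eq_zero_of_isUnit hu
    omega
  · intro f g hfg
    by_contra hcon
    push_neg at hcon
    obtain ⟨hfU, hgU⟩ := hcon
    have hQne : QY ≠ 0 := hmon.ne_zero
    have hf0 : f ≠ 0 := by rintro rfl; rw [zero_mul] at hfg; exact hQne hfg
    have hg0 : g ≠ 0 := by rintro rfl; rw [mul_zero] at hfg; exact hQne hfg
    have hlc : f.leadingCoeff * g.leadingCoeff = 1 := by
      rw [← leadingCoeff_mul, ← hfg]; exact hmon
    set f' := C g.leadingCoeff * f with hf'def
    set g' := C f.leadingCoeff * g with hg'def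
    have hf'm : f'.Monic := by
      rw [Monic, hf'def, leadingCoeff_mul, leadingCoeff_C, mul_comm]; exact hlc
    have hg'm : g'.Monic := by
      rw [Monic, hg'def, leadingCoeff_mul, leadingCoeff_C]; exact hlc
    have hCC1 : (C g.leadingCoeff : (K[X])[X]) * C f.leadingCoeff = 1 := by
      rw [← C_mul, mul_comm, hlc, C_1]
    have hfg' : QY = f' * g' := by
      rw [hfg, hf'def, hg'def]
      linear_combination (-(f * g)) * hCC1
    have hsum : f'.natDegree + g'.natDegree = 4 := by
      rw [← natDegree_mul hf'm.ne_zero hg'm.ne_zero, ← hfg', hdeg]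
    have hfU2 : ¬ IsUnit f' :=
      fun h => hfU (isUnit_of_dvd_unit ⟨C g.leadingCoeff, by rw [hf'def]; ring⟩ h)
    have hgU2 : ¬ IsUnit g' :=
      fun h => hgU (isUnit_of_dvd_unit ⟨C f.leadingCoeff, by rw [hg'def]; ring⟩ h)
    have hfnd : f'.natDegree ≠ 0 := by
      intro h
      exact hfU2 ((hf'm.natDegree_eq_zero.mp h) ▸ isUnit_one)
    have hgnd : g'.natDegree ≠ 0 := by
      intro h
      exact hgU2 ((hg'm.natDegree_eq_zero.mp h) ▸ isUnit_one)
    have keyLin : ∀ u v : (K[X])[X], u.Monic → u.natDegree = 1 → QY = u * v → False := by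
      intro u v hum hud huv
      have hurep := hum.eq_X_add_C hud
      have hdvd : Polynomial.X - C (-(u.coeff 0)) ∣ QY := by
        rw [map_neg, sub_neg_eq_add, ← hurep]; exact ⟨v, huv⟩
      have hroot := dvd_iff_isRoot.mp hdvd
      rw [IsRoot, hQYdef] at hroot
      simp only [eval_add, eval_mul, eval_pow, eval_C, eval_X] at hroot
      exact noLinPoly ht0 ht1 (u.coeff 0) (by linear_combination hroot)
    have h14 : f'.natDegree = 1 ∨ f'.natDegree = 2 ∨ f'.natDegree = 3 := by omega
    rcases h14 with h1 | h2 | h3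
    · exact keyLin f' g' hf'm h1 hfg'
    · -- both degree 2
      have hgd : g'.natDegree = 2 := by omega
      have hfc2 : f'.coeff 2 = 1 := h2 ▸ hf'm.coeff_natDegree
      have hgc2 : g'.coeff 2 = 1 := hgd ▸ hg'm.coeff_natDegree
      have hfrep : f' = X ^ 2 + C (f'.coeff 1) * X + C (f'.coeff 0) := by
        have h := aux_repr2 (le_of_eq h2)
        rwa [hfc2, C_1, one_mul] at h
      have hgrep : g' = X ^ 2 + C (g'.coeff 1) * X + C (g'.coeff 0) := by
        have h := aux_repr2 (le_of_eq hgd)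
        rwa [hgc2, C_1, one_mul] at h
      rw [hQYdef, hfrep, hgrep] at hfg'
      have hcanonY : C (f'.coeff 1 + g'.coeff 1 - C t * X) * X ^ 3
          + C (f'.coeff 0 + g'.coeff 0 + f'.coeff 1 * g'.coeff 1) * X ^ 2
          + C (f'.coeff 1 * g'.coeff 0 + f'.coeff 0 * g'.coeff 1 - C t) * X
          + C (f'.coeff 0 * g'.coeff 0 - (1 + C t) * (X ^ 4 + 1)) = 0 := by
        simp only [map_add, map_sub, map_mul, map_pow, map_one] at hfg' ⊢
        linear_combination -hfg'
      obtain ⟨E3, E2, E1, E0⟩ := aux_coeffs4 hcanonY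
      exact noQuad ht0 ht1 _ _ _ _ E3 E2 E1 E0
    · exact keyLin g' f' hg'm (by omega) (by rw [hfg', mul_comm])
end S4

end PRE

noncomputable section Final

open MvPolynomial

theorem stmt_13 :
    Irreducible (X 0 ^ 4 + X 1 ^ 4 + 1 +
        C (algebraMap (RatFunc ℚ) (AlgebraicClosure (RatFunc ℚ)) RatFunc.X) *
          (X 0 ^ 4 + X 0 * X 1 ^ 3 + X 1 + 1) :
      MvPolynomial (Fin 2) (AlgebraicClosure (RatFunc ℚ))) := by
  classical
  set K := AlgebraicClosure (RatFunc ℚ) with hK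
  haveI hcz0 : CharZero (RatFunc ℚ) :=
    charZero_of_injective_algebraMap (RatFunc.algebraMap_injective ℚ)
  haveI hcz : CharZero K := inferInstanceAs (CharZero (AlgebraicClosure (RatFunc ℚ)))
  set t : K := algebraMap (RatFunc ℚ) K RatFunc.X with htdef
  have hinj : Function.Injective (algebraMap (RatFunc ℚ) K) :=
    (algebraMap (RatFunc ℚ) K).injective
  have ht0 : t ≠ 0 := by
    intro h
    rw [htdef] at h
    exact RatFunc.X_ne_zero (hinj (h.trans (map_zero _).symm))
  have ht1 : 1 + t ≠ 0 := by
    intro h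
    rw [htdef] at h
    have h2 : algebraMap (RatFunc ℚ) K (1 + RatFunc.X) = algebraMap (RatFunc ℚ) K 0 := by
      rw [map_add, map_one, map_zero]
      exact h
    have h3 : (1 + RatFunc.X : RatFunc ℚ) = 0 := hinj h2
    have h4 : algebraMap (Polynomial ℚ) (RatFunc ℚ) (1 + Polynomial.X) = algebraMap (Polynomial ℚ) (RatFunc ℚ) 0 := by
      rw [map_add, map_one, map_zero, RatFunc.algebraMap_X]
      exact h3
    have h5 : (1 + Polynomial.X : Polynomial ℚ) = 0 := RatFunc.algebraMap_injective ℚ h4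
    simpa [Polynomial.coeff_one] using congrArg (fun p => Polynomial.coeff p 1) h5
  let φ : (Polynomial (Polynomial K)) →+* MvPolynomial (Fin 2) K :=
    Polynomial.eval₂RingHom
      (Polynomial.eval₂RingHom (MvPolynomial.C) (MvPolynomial.X 0))
      (MvPolynomial.X 1)
  let ψ : MvPolynomial (Fin 2) K →+* (Polynomial (Polynomial K)) :=
    MvPolynomial.eval₂Hom (Polynomial.C.comp Polynomial.C)
      (fun i => if i = 0 then Polynomial.C Polynomial.X else Polynomial.X)
  have hψφ : ψ.comp φ = RingHom.id _ := by
    apply Polynomial.ringHom_ext'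
    · apply Polynomial.ringHom_ext'
      · apply RingHom.ext
        intro k
        simp [φ, ψ]
      · simp [φ, ψ]
    · simp [φ, ψ]
  have hφψ : φ.comp ψ = RingHom.id _ := by
    apply MvPolynomial.ringHom_ext
    · intro k
      simp [φ, ψ]
    · intro i
      fin_cases i <;> simp [φ, ψ]
  let E : (Polynomial (Polynomial K)) ≃+* MvPolynomial (Fin 2) K :=
    RingEquiv.ofRingHom φ ψ hφψ hψφ
  have key := keyIrr ht0 ht1
  have hkey2 : Irreducible (E ((Polynomial.X : Polynomial (Polynomial K)) ^ 4
      + Polynomial.C (Polynomial.C t * Polynomial.X) * Polynomial.X ^ 3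
      + Polynomial.C (Polynomial.C t) * Polynomial.X
      + Polynomial.C ((1 + Polynomial.C t) * (Polynomial.X ^ 4 + 1)))) := key.map E
  have hcomp : E ((Polynomial.X : Polynomial (Polynomial K)) ^ 4
      + Polynomial.C (Polynomial.C t * Polynomial.X) * Polynomial.X ^ 3
      + Polynomial.C (Polynomial.C t) * Polynomial.X
      + Polynomial.C ((1 + Polynomial.C t) * (Polynomial.X ^ 4 + 1)))
      = X 0 ^ 4 + X 1 ^ 4 + 1 + C t * (X 0 ^ 4 + X 0 * X 1 ^ 3 + X 1 + 1) := by
    show φ _ = _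
    simp only [φ, Polynomial.coe_eval₂RingHom, Polynomial.eval₂_add, Polynomial.eval₂_mul,
      Polynomial.eval₂_pow, Polynomial.eval₂_X, Polynomial.eval₂_C, Polynomial.eval₂_one]
    ring
  rw [hcomp] at hkey2
  exact hkey2

end Final
end
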